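/- (Basis for two identical copies of a qubit channel, Eq. (26).) The ℝ-linear span of the set {J ⊗ J : J a qubit-channel Choi operator}, inside the Hermitian matrices on (ℂ²⊗ℂ²)⊗(ℂ²⊗ℂ²), has dimension 91 = C(14,2), and it equals the ℝ-linear span of the set B₂ := {(1⊗(1/2)·1)^{⊗2}} ∪ {(ρ + σ⊗τ)^{⊗2}, (ρ − σ⊗τ)^{⊗2} : ρ ∈ P, σ ∈ ΣI, τ ∈ ΣO} ∪ {(ρ + σ⊗τ + σ'⊗τ')^{⊗2} : ρ ∈ P, σ,σ' ∈ ΣI, τ,τ' ∈ ΣO}, where P := {1⊗(1/2)·1, 2|φ⁺⟩⟨φ⁺|, 1⊗|0⟩⟨0|, 1⊗|+⟩⟨+|, 1⊗|+_Y⟩⟨+_Y|}, ΣI := {1, X, Y, Z}, ΣO := {X, Y, Z}. In particular B₂ contains a subset of 91 linearly independent matrices forming a basis of that span. -/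

import Mathlib

open scoped BigOperators ComplexOrder Kronecker

noncomputable section

/-- Pauli X. -/
def pauliX : Matrix (Fin 2) (Fin 2) ℂ := !![0, 1; 1, 0]
/-- Pauli Y. -/
def pauliY : Matrix (Fin 2) (Fin 2) ℂ := !![0, -Complex.I; Complex.I, 0]
/-- Pauli Z. -/
def pauliZ : Matrix (Fin 2) (Fin 2) ℂ := !![1, 0; 0, -1]

/-- The input-side family ΣI = {1, X, Y, Z}. -/
def sigmaI : Fin 4 → Matrix (Fin 2) (Fin 2) ℂ := ![1, pauliX, pauliY, pauliZ]
/-- The output-side family ΣO = {X, Y, Z}. -/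
def sigmaO : Fin 3 → Matrix (Fin 2) (Fin 2) ℂ := ![pauliX, pauliY, pauliZ]

/-- Partial trace over the (second) output factor of a matrix on ℂ²⊗ℂ². -/
def ptraceO (M : Matrix (Fin 2 × Fin 2) (Fin 2 × Fin 2) ℂ) : Matrix (Fin 2) (Fin 2) ℂ :=
  Matrix.of fun i i' => ∑ o : Fin 2, M (i, o) (i', o)

/-- A qubit-channel Choi operator: positive semidefinite with output partial trace 1₂. -/
def IsChoi (J : Matrix (Fin 2 × Fin 2) (Fin 2 × Fin 2) ℂ) : Prop :=
  J.PosSemidef ∧ ptraceO J = 1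

/-- Rank-one projector |v⟩⟨v| onto a vector. -/
def proj {n : Type*} (v : n → ℂ) : Matrix n n ℂ :=
  Matrix.of fun x y => v x * star (v y)

/-- |0⟩. -/
def ket0 : Fin 2 → ℂ := ![1, 0]
/-- |+⟩ = (|0⟩+|1⟩)/√2. -/
def ketPlus : Fin 2 → ℂ := ![(Real.sqrt 2 : ℂ)⁻¹, (Real.sqrt 2 : ℂ)⁻¹]
/-- |+_Y⟩ = (|0⟩+i|1⟩)/√2. -/
def ketPlusY : Fin 2 → ℂ := ![(Real.sqrt 2 : ℂ)⁻¹, (Real.sqrt 2 : ℂ)⁻¹ * Complex.I]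
/-- |φ⁺⟩ = (|00⟩+|11⟩)/√2. -/
def ketPhiPlus : Fin 2 × Fin 2 → ℂ := fun x => if x.1 = x.2 then (Real.sqrt 2 : ℂ)⁻¹ else 0

/-- The family P = {1⊗(1/2)1, 2|φ⁺⟩⟨φ⁺|, 1⊗|0⟩⟨0|, 1⊗|+⟩⟨+|, 1⊗|+_Y⟩⟨+_Y|}. -/
def Pfam : Fin 5 → Matrix (Fin 2 × Fin 2) (Fin 2 × Fin 2) ℂ :=
  ![(1 : Matrix (Fin 2) (Fin 2) ℂ) ⊗ₖ ((1 / 2 : ℂ) • (1 : Matrix (Fin 2) (Fin 2) ℂ)),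
    (2 : ℂ) • proj ketPhiPlus,
    (1 : Matrix (Fin 2) (Fin 2) ℂ) ⊗ₖ proj ket0,
    (1 : Matrix (Fin 2) (Fin 2) ℂ) ⊗ₖ proj ketPlus,
    (1 : Matrix (Fin 2) (Fin 2) ℂ) ⊗ₖ proj ketPlusY]

/-- Tensor (Kronecker) square M ⊗ M. -/
def tsq (M : Matrix (Fin 2 × Fin 2) (Fin 2 × Fin 2) ℂ) :
    Matrix ((Fin 2 × Fin 2) × (Fin 2 × Fin 2)) ((Fin 2 × Fin 2) × (Fin 2 × Fin 2)) ℂ :=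
  M ⊗ₖ M

/-- The family B₂ of Eq. (26): {(1⊗(1/2)1)^{⊗2}} ∪ {(ρ ± σ⊗τ)^{⊗2}} ∪
{(ρ + σ⊗τ + σ'⊗τ')^{⊗2}}. -/
def B2 : Unit ⊕ Fin 5 × Fin 4 × Fin 3 × Bool ⊕ Fin 5 × (Fin 4 × Fin 3) × (Fin 4 × Fin 3) →
    Matrix ((Fin 2 × Fin 2) × (Fin 2 × Fin 2)) ((Fin 2 × Fin 2) × (Fin 2 × Fin 2)) ℂ
  | Sum.inl _ =>
      tsq ((1 : Matrix (Fin 2) (Fin 2) ℂ) ⊗ₖ ((1 / 2 : ℂ) • (1 : Matrix (Fin 2) (Fin 2) ℂ)))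
  | Sum.inr (Sum.inl (r, i, o, sgn)) =>
      tsq (Pfam r + (if sgn then (1 : ℂ) else -1) • (sigmaI i ⊗ₖ sigmaO o))
  | Sum.inr (Sum.inr (r, (i, o), (i', o'))) =>
      tsq (Pfam r + sigmaI i ⊗ₖ sigmaO o + sigmaI i' ⊗ₖ sigmaO o')

/-- The span (over ℝ) of two identical copies of qubit-channel Choi operators. -/
def twoCopySpan : Submodule ℝ
    (Matrix ((Fin 2 × Fin 2) × (Fin 2 × Fin 2)) ((Fin 2 × Fin 2) × (Fin 2 × Fin 2)) ℂ) :=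
  Submodule.span ℝ {M | ∃ J, IsChoi J ∧ M = J ⊗ₖ J}


set_option maxHeartbeats 2000000
open Matrix
-- ### abbreviations
abbrev M2' : Type := Matrix (Fin 2) (Fin 2) ℂ
abbrev M4' : Type := Matrix (Fin 2 × Fin 2) (Fin 2 × Fin 2) ℂ
abbrev M16' : Type := Matrix ((Fin 2 × Fin 2) × (Fin 2 × Fin 2)) ((Fin 2 × Fin 2) × (Fin 2 × Fin 2)) ℂ

def E0 : M4' := (1 : M2') ⊗ₖ ((1 / 2 : ℂ) • (1 : M2'))
def Vm (p : Fin 4 × Fin 3) : M4' := sigmaI p.1 ⊗ₖ sigmaO p.2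

-- ### small Pauli facts
lemma sigmaO_eq (o : Fin 3) : sigmaO o = sigmaI o.succ := by fin_cases o <;> rfl

lemma pauli_herm (a : Fin 4) : (sigmaI a)ᴴ = sigmaI a := by
  fin_cases a <;> ext i j <;> fin_cases i <;> fin_cases j <;>
    simp [sigmaI, pauliX, pauliY, pauliZ, Matrix.conjTranspose_apply, Matrix.one_apply]

lemma pauli_sq (a : Fin 4) : sigmaI a * sigmaI a = 1 := by
  fin_cases a <;> ext i j <;> fin_cases i <;> fin_cases j <;>
    simp [sigmaI, pauliX, pauliY, pauliZ, Matrix.mul_apply, Fin.sum_univ_two,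
      Matrix.one_apply, Complex.I_mul_I] <;> ring_nf <;> simp [Complex.I_sq]

lemma trace_pauli (a : Fin 4) : (sigmaI a).trace = if a = 0 then 2 else 0 := by
  fin_cases a <;> simp [sigmaI, pauliX, pauliY, pauliZ, Matrix.trace_fin_two]

lemma trace_pauli_mul (a b : Fin 4) :
    (sigmaI a * sigmaI b).trace = if a = b then 2 else 0 := by
  fin_cases a <;> fin_cases b <;>
    simp [sigmaI, pauliX, pauliY, pauliZ, Matrix.trace_fin_two, Matrix.mul_apply,
      Fin.sum_univ_two, Complex.I_mul_I] <;> ring_nf <;> simp [Complex.I_sq] <;> ring_nf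

lemma kron_conjT (A B : M2') : (A ⊗ₖ B)ᴴ = Aᴴ ⊗ₖ Bᴴ := by
  ext ⟨i, j⟩ ⟨k, l⟩
  simp [Matrix.conjTranspose_apply, Matrix.kroneckerMap_apply, mul_comm]

lemma Vm_herm (p : Fin 4 × Fin 3) : (Vm p)ᴴ = Vm p := by
  rw [Vm, kron_conjT, pauli_herm, sigmaO_eq, pauli_herm, ← sigmaO_eq]

lemma Vm_sq (p : Fin 4 × Fin 3) : Vm p * Vm p = 1 := by
  rw [Vm, ← Matrix.mul_kronecker_mul, pauli_sq, sigmaO_eq, pauli_sq, Matrix.one_kronecker_one]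

lemma trace_Vm (p : Fin 4 × Fin 3) : (Vm p).trace = 0 := by
  rw [Vm, Matrix.trace_kronecker, sigmaO_eq, trace_pauli, trace_pauli]
  simp [Fin.succ_ne_zero]

lemma trace_Vm_mul (p q : Fin 4 × Fin 3) :
    (Vm p * Vm q).trace = if p = q then 4 else 0 := by
  rw [Vm, Vm, ← Matrix.mul_kronecker_mul, Matrix.trace_kronecker, sigmaO_eq, sigmaO_eq,
    trace_pauli_mul, trace_pauli_mul]
  rcases eq_or_ne p q with h | h
  · simp [h]; norm_num
  · rcases eq_or_ne p.1 q.1 with h1 | h1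
    · have h2 : p.2 ≠ q.2 := fun h2 => h (Prod.ext h1 h2)
      simp [h1, Fin.succ_inj, h2, h]
    · simp [h1, h]

-- real smul vs complex smul
lemma rsmul {n : Type*} (r : ℝ) (M : Matrix n n ℂ) : (r : ℂ) • M = r • M :=
  algebraMap_smul ℂ r M

lemma E0_eq : E0 = (1 / 2 : ℝ) • (1 : M4') := by
  rw [E0, Matrix.kronecker_smul, Matrix.one_kronecker_one, ← rsmul]
  norm_num
-- ### ptrace lemmas
lemma ptraceO_kron (A B : M2') : ptraceO (A ⊗ₖ B) = B.trace • A := by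
  ext i j
  simp [ptraceO, Matrix.kroneckerMap_apply, Matrix.trace, Matrix.diag, Finset.sum_mul, mul_comm]
  ring

lemma ptraceO_add (M N : M4') : ptraceO (M + N) = ptraceO M + ptraceO N := by
  ext i j; simp [ptraceO, Finset.sum_add_distrib]

lemma ptraceO_rsmul (r : ℝ) (M : M4') : ptraceO (r • M) = r • ptraceO M := by
  ext i j; simp [ptraceO, Finset.smul_sum]

lemma ptraceO_E0 : ptraceO E0 = 1 := by
  rw [E0, ptraceO_kron]
  norm_num [Matrix.trace_smul, Matrix.trace_one]

lemma ptraceO_Vm (p : Fin 4 × Fin 3) : ptraceO (Vm p) = 0 := by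
  rw [Vm, ptraceO_kron, sigmaO_eq, trace_pauli]
  simp [Fin.succ_ne_zero]

-- ### PSD lemmas
lemma psd_csmul {n : Type*} [Fintype n] {M : Matrix n n ℂ} (h : M.PosSemidef) {c : ℝ}
    (hc : 0 ≤ c) : ((c : ℂ) • M).PosSemidef := by
  constructor
  · rw [Matrix.IsHermitian, Matrix.conjTranspose_smul, h.1.eq]
    congr 1
    simp [Complex.ext_iff]
  · exact (h.smul (a := (c : ℂ)) (by exact_mod_cast hc)).2

lemma psd_rsmul {n : Type*} [Fintype n] {M : Matrix n n ℂ} (h : M.PosSemidef) {c : ℝ}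
    (hc : 0 ≤ c) : (c • M).PosSemidef := by
  rw [← rsmul]; exact psd_csmul h hc

lemma psd_one_add {P : M4'} (h1 : Pᴴ = P) (h2 : P * P = 1) : (1 + P).PosSemidef := by
  have hA : (1 + P)ᴴ = 1 + P := by simp [Matrix.conjTranspose_add, h1]
  have key : (1 + P)ᴴ * (1 + P) = (2 : ℂ) • (1 + P) := by
    rw [hA]
    simp only [Matrix.add_mul, Matrix.mul_add, h2, Matrix.mul_one, Matrix.one_mul, two_smul]
    abel
  have : (1 + P) = ((1/2 : ℝ) : ℂ) • ((1 + P)ᴴ * (1 + P)) := by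
    rw [key, smul_smul]; norm_num
  rw [this]
  exact psd_csmul (Matrix.posSemidef_conjTranspose_mul_self _) (by norm_num)

lemma psd_one_add_neg {P : M4'} (h1 : Pᴴ = P) (h2 : P * P = 1) : (1 - P).PosSemidef := by
  have := psd_one_add (P := -P) (by simp [h1]) (by simp [h2])
  simpa [sub_eq_add_neg] using this

-- kron against identity computes partial trace
lemma trace_mul_kron_one (A : M2') (M : M4') :
    ((A ⊗ₖ (1 : M2')) * M).trace = (A * ptraceO M).trace := by
  simp only [Matrix.trace, Matrix.diag, Matrix.mul_apply, ptraceO, Matrix.kroneckerMap_apply,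
    Fintype.sum_prod_type, Matrix.one_apply, Matrix.of_apply, Fin.sum_univ_two,
    Finset.mul_sum, Finset.sum_mul]
  norm_num
  ring
-- ### Pauli completeness
lemma completeness (M : M4') :
    M = ∑ a : Fin 4, ∑ b : Fin 4,
      (((sigmaI a ⊗ₖ sigmaI b) * M).trace / 4) • (sigmaI a ⊗ₖ sigmaI b) := by
  ext ⟨x1, x2⟩ ⟨y1, y2⟩
  fin_cases x1 <;> fin_cases x2 <;> fin_cases y1 <;> fin_cases y2 <;>
  · simp only [Matrix.sum_apply, Matrix.smul_apply, Matrix.trace, Matrix.diag,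
      Matrix.mul_apply, Matrix.kroneckerMap_apply, Fintype.sum_prod_type,
      Fin.sum_univ_four, Fin.sum_univ_two, sigmaI, pauliX, pauliY, pauliZ,
      Matrix.cons_val', Matrix.cons_val_zero, Matrix.cons_val_one, Matrix.head_cons,
      Matrix.cons_val_fin_one, Matrix.empty_val', Matrix.head_fin_const,
      Matrix.one_apply, smul_eq_mul, Matrix.cons_val]
    try norm_num [Matrix.one_apply]
    try ring_nf
    try simp only [← Prod.mk_zero_zero, ← Prod.mk_one_one, Prod.mk.injEq, zero_ne_one,
      one_ne_zero, false_and, and_false, if_false, if_true, and_self, add_zero, zero_add]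
    try simp only [Complex.I_sq]
    try ring_nf

lemma sigmaI_zero : sigmaI 0 = (1 : M2') := rfl

lemma kron_herm (a b : Fin 4) : (sigmaI a ⊗ₖ sigmaI b)ᴴ = sigmaI a ⊗ₖ sigmaI b := by
  rw [kron_conjT, pauli_herm, pauli_herm]

lemma trace_PJ_real {P J : M4'} (hP : Pᴴ = P) (hJ : Jᴴ = J) : ((P * J).trace).im = 0 := by
  have h1 : star ((P * J).trace) = ((P * J)ᴴ).trace := by
    rw [Matrix.trace_conjTranspose]
  have h2 : (P * J)ᴴ = J * P := by rw [Matrix.conjTranspose_mul, hP, hJ]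
  have h3 : star ((P * J).trace) = (P * J).trace := by
    rw [h1, h2, Matrix.trace_mul_comm]
  exact Complex.conj_eq_iff_im.mp h3

-- decomposition of a hermitian unit-partial-trace matrix
lemma herm_ptrace_decomp {J : M4'} (hH : Jᴴ = J) (hT : ptraceO J = 1) :
    ∃ r : Fin 4 → Fin 3 → ℝ, J = E0 + ∑ a : Fin 4, ∑ o : Fin 3, r a o • Vm (a, o) := by
  refine ⟨fun a o => ((((sigmaI a ⊗ₖ sigmaO o) * J).trace / 4)).re, ?_⟩
  have hc0 : ∀ a, ((sigmaI a ⊗ₖ sigmaI 0) * J).trace = if a = 0 then 2 else 0 := by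
    intro a
    rw [sigmaI_zero, trace_mul_kron_one, hT, Matrix.mul_one, trace_pauli]
  have hreal : ∀ (a : Fin 4) (o : Fin 3),
      ((((sigmaI a ⊗ₖ sigmaO o) * J).trace / 4)) =
      (((((sigmaI a ⊗ₖ sigmaO o) * J).trace / 4)).re : ℂ) := by
    intro a o
    have h := trace_PJ_real (P := sigmaI a ⊗ₖ sigmaO o)
      (by rw [sigmaO_eq]; exact kron_herm _ _) hH
    apply Complex.ext
    · simp
    · simp [Complex.div_im, h]
  have step1 : ∀ a : Fin 4,
      (∑ b : Fin 4, (((sigmaI a ⊗ₖ sigmaI b) * J).trace / 4) • (sigmaI a ⊗ₖ sigmaI b))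
      = ((if a = 0 then (2 : ℂ) else 0) / 4) • (sigmaI a ⊗ₖ sigmaI 0)
        + ∑ o : Fin 3,
            ((((sigmaI a ⊗ₖ sigmaO o) * J).trace / 4)).re • (sigmaI a ⊗ₖ sigmaO o) := by
    intro a
    rw [Fin.sum_univ_succ
      (f := fun b : Fin 4 => (((sigmaI a ⊗ₖ sigmaI b) * J).trace / 4) • (sigmaI a ⊗ₖ sigmaI b)),
      hc0 a]
    congr 1
    refine Finset.sum_congr rfl fun o _ => ?_
    rw [← sigmaO_eq]
    conv_lhs => rw [hreal a o]
    rw [rsmul]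
  calc J = ∑ a : Fin 4, ∑ b : Fin 4,
        (((sigmaI a ⊗ₖ sigmaI b) * J).trace / 4) • (sigmaI a ⊗ₖ sigmaI b) := completeness J
    _ = ∑ a : Fin 4, (((if a = 0 then (2 : ℂ) else 0) / 4) • (sigmaI a ⊗ₖ sigmaI 0)
        + ∑ o : Fin 3,
            ((((sigmaI a ⊗ₖ sigmaO o) * J).trace / 4)).re • (sigmaI a ⊗ₖ sigmaO o)) :=
        Finset.sum_congr rfl fun a _ => step1 a
    _ = (∑ a : Fin 4, ((if a = 0 then (2 : ℂ) else 0) / 4) • (sigmaI a ⊗ₖ sigmaI 0))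
        + ∑ a : Fin 4, ∑ o : Fin 3,
            ((((sigmaI a ⊗ₖ sigmaO o) * J).trace / 4)).re • (sigmaI a ⊗ₖ sigmaO o) :=
        Finset.sum_add_distrib
    _ = E0 + ∑ a : Fin 4, ∑ o : Fin 3,
            ((((sigmaI a ⊗ₖ sigmaO o) * J).trace / 4)).re • Vm (a, o) := by
        congr 1
        rw [Fin.sum_univ_four, sigmaI_zero]
        norm_num [show (1 : Fin 4) ≠ 0 from by decide, show (2 : Fin 4) ≠ 0 from by decide,
          show (3 : Fin 4) ≠ 0 from by decide, Matrix.one_kronecker_one, E0_eq, ← rsmul]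
-- ### index family
def Efam : Option (Fin 4 × Fin 3) → M4' := fun a => Option.elim a E0 Vm

def symF : Sym2 (Option (Fin 4 × Fin 3)) → M16' :=
  Sym2.lift ⟨fun a b => Efam a ⊗ₖ Efam b + Efam b ⊗ₖ Efam a, fun a b => add_comm _ _⟩

def Wspan : Submodule ℝ M16' := Submodule.span ℝ (Set.range symF)
def Uspan : Submodule ℝ M4' := Submodule.span ℝ (Set.range Efam)

lemma symF_mk (a b : Option (Fin 4 × Fin 3)) :
    symF (s(a, b)) = Efam a ⊗ₖ Efam b + Efam b ⊗ₖ Efam a := by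
  simp [symF]

lemma symF_mem (a b : Option (Fin 4 × Fin 3)) :
    Efam a ⊗ₖ Efam b + Efam b ⊗ₖ Efam a ∈ Wspan := by
  rw [← symF_mk]; exact Submodule.subset_span ⟨_, rfl⟩

-- kronecker of sums
lemma sum_kron {α : Type*} (s : Finset α) (f : α → M4') (Y : M4') :
    (∑ a ∈ s, f a) ⊗ₖ Y = ∑ a ∈ s, f a ⊗ₖ Y :=
  map_sum (AddMonoidHom.mk' (fun X => X ⊗ₖ Y) fun X X' => Matrix.add_kronecker X X' Y) f s

lemma kron_sum {α : Type*} (s : Finset α) (f : α → M4') (Y : M4') :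
    Y ⊗ₖ (∑ a ∈ s, f a) = ∑ a ∈ s, Y ⊗ₖ f a :=
  map_sum (AddMonoidHom.mk' (fun X => Y ⊗ₖ X) fun X X' => Matrix.kronecker_add Y X X') f s

lemma memW (d : Option (Fin 4 × Fin 3) → ℝ) : tsq (∑ a, d a • Efam a) ∈ Wspan := by
  have comb : ∀ a b : Option (Fin 4 × Fin 3), (d a * d b) • (Efam a ⊗ₖ Efam b)
      = (d a * d b / 2) • (Efam a ⊗ₖ Efam b) + (d b * d a / 2) • (Efam a ⊗ₖ Efam b) := by
    intro a b; rw [← add_smul]; congr 1; ring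
  have h1 : ∀ a b : Option (Fin 4 × Fin 3),
      (d a • Efam a) ⊗ₖ (d b • Efam b) = (d a * d b) • (Efam a ⊗ₖ Efam b) := by
    intro a b
    rw [Matrix.smul_kronecker, Matrix.kronecker_smul, smul_smul]
  have expand : tsq (∑ a, d a • Efam a)
      = ∑ a, ∑ b, (d a * d b / 2) • symF (s(a, b)) := by
    rw [tsq, sum_kron]
    rw [Finset.sum_congr rfl fun a _ => kron_sum Finset.univ _ _]
    rw [Finset.sum_congr rfl fun a _ => Finset.sum_congr rfl fun b _ => h1 a b]
    calc (∑ a, ∑ b, (d a * d b) • (Efam a ⊗ₖ Efam b))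
        = ∑ a, ∑ b, ((d a * d b / 2) • (Efam a ⊗ₖ Efam b)
            + (d b * d a / 2) • (Efam a ⊗ₖ Efam b)) :=
          Finset.sum_congr rfl fun a _ => Finset.sum_congr rfl fun b _ => comb a b
      _ = (∑ a, ∑ b, (d a * d b / 2) • (Efam a ⊗ₖ Efam b))
          + ∑ a, ∑ b, (d b * d a / 2) • (Efam a ⊗ₖ Efam b) := by
          rw [Finset.sum_congr rfl fun a _ => (Finset.sum_add_distrib
            (s := (Finset.univ : Finset (Option (Fin 4 × Fin 3))))
            (f := fun b => (d a * d b / 2) • (Efam a ⊗ₖ Efam b))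
            (g := fun b => (d b * d a / 2) • (Efam a ⊗ₖ Efam b)))]
          exact Finset.sum_add_distrib
      _ = (∑ a, ∑ b, (d a * d b / 2) • (Efam a ⊗ₖ Efam b))
          + ∑ a, ∑ b, (d a * d b / 2) • (Efam b ⊗ₖ Efam a) := by
          congr 1
          exact Finset.sum_comm
      _ = ∑ a, ∑ b, ((d a * d b / 2) • (Efam a ⊗ₖ Efam b)
            + (d a * d b / 2) • (Efam b ⊗ₖ Efam a)) := by
          rw [Finset.sum_congr rfl fun a _ => (Finset.sum_add_distrib
            (s := (Finset.univ : Finset (Option (Fin 4 × Fin 3))))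
            (f := fun b => (d a * d b / 2) • (Efam a ⊗ₖ Efam b))
            (g := fun b => (d a * d b / 2) • (Efam b ⊗ₖ Efam a)))]
          exact Finset.sum_add_distrib.symm
      _ = ∑ a, ∑ b, (d a * d b / 2) • symF (s(a, b)) := by
          exact Finset.sum_congr rfl fun a _ => Finset.sum_congr rfl fun b _ => by
            rw [symF_mk, smul_add]
  rw [expand]
  exact Submodule.sum_mem _ fun a _ => Submodule.sum_mem _ fun b _ =>
    Submodule.smul_mem _ _ (Submodule.subset_span ⟨_, rfl⟩)

lemma memW' {X : M4'} (hX : X ∈ Uspan) : tsq X ∈ Wspan := by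
  rw [Uspan, Submodule.mem_span_range_iff_exists_fun] at hX
  obtain ⟨c, hc⟩ := hX
  rw [← hc]
  exact memW c
-- ### tsq expansion
lemma texp (X Y : M4') : tsq (X + Y) = tsq X + (X ⊗ₖ Y + Y ⊗ₖ X) + tsq Y := by
  simp only [tsq, Matrix.add_kronecker, Matrix.kronecker_add]; abel

-- ### the inversion machinery
lemma gen_syms {T : Submodule ℝ M16'} (c : ℝ) (hc : c ≠ 0)
    (h0 : tsq E0 ∈ T)
    (hA : ∀ p, tsq (E0 + c • Vm p) ∈ T)
    (hC : ∀ p q, tsq (E0 + c • Vm p + c • Vm q) ∈ T) :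
    ∀ q : Sym2 (Option (Fin 4 × Fin 3)), symF q ∈ T := by
  have hQ : ∀ p, tsq (Vm p) ∈ T := by
    intro p
    have key : (2 * c ^ 2) • tsq (Vm p) = tsq (E0 + c • Vm p + c • Vm p)
        + (-2 : ℝ) • tsq (E0 + c • Vm p) + tsq E0 := by
      simp only [tsq, Matrix.add_kronecker, Matrix.kronecker_add,
        Matrix.smul_kronecker, Matrix.kronecker_smul]
      module
    have hm := Submodule.add_mem T (Submodule.add_mem T (hC p p)
      (Submodule.smul_mem T (-2 : ℝ) (hA p))) h0
    rw [← key] at hm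
    exact (Submodule.smul_mem_iff T (by positivity)).mp hm
  have hS : ∀ p, (E0 ⊗ₖ Vm p + Vm p ⊗ₖ E0) ∈ T := by
    intro p
    have key : c • (E0 ⊗ₖ Vm p + Vm p ⊗ₖ E0) = tsq (E0 + c • Vm p)
        + (-1 : ℝ) • tsq E0 + (-(c ^ 2)) • tsq (Vm p) := by
      simp only [tsq, Matrix.add_kronecker, Matrix.kronecker_add,
        Matrix.smul_kronecker, Matrix.kronecker_smul]
      module
    have hm := Submodule.add_mem T (Submodule.add_mem T (hA p)
      (Submodule.smul_mem T (-1 : ℝ) h0)) (Submodule.smul_mem T (-(c ^ 2)) (hQ p))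
    rw [← key] at hm
    exact (Submodule.smul_mem_iff T hc).mp hm
  have hP : ∀ p q, (Vm p ⊗ₖ Vm q + Vm q ⊗ₖ Vm p) ∈ T := by
    intro p q
    have key : (c ^ 2) • (Vm p ⊗ₖ Vm q + Vm q ⊗ₖ Vm p)
        = tsq (E0 + c • Vm p + c • Vm q) + (-1 : ℝ) • tsq E0
          + (-c) • (E0 ⊗ₖ Vm p + Vm p ⊗ₖ E0) + (-c) • (E0 ⊗ₖ Vm q + Vm q ⊗ₖ E0)
          + (-(c ^ 2)) • tsq (Vm p) + (-(c ^ 2)) • tsq (Vm q) := by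
      simp only [tsq, Matrix.add_kronecker, Matrix.kronecker_add,
        Matrix.smul_kronecker, Matrix.kronecker_smul]
      module
    have hm := Submodule.add_mem T (Submodule.add_mem T (Submodule.add_mem T
      (Submodule.add_mem T (Submodule.add_mem T (hC p q)
        (Submodule.smul_mem T (-1 : ℝ) h0))
        (Submodule.smul_mem T (-c) (hS p)))
        (Submodule.smul_mem T (-c) (hS q)))
      (Submodule.smul_mem T (-(c ^ 2)) (hQ p)))
      (Submodule.smul_mem T (-(c ^ 2)) (hQ q))
    rw [← key] at hm
    exact (Submodule.smul_mem_iff T (pow_ne_zero 2 hc)).mp hm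
  intro q
  induction q using Sym2.ind with
  | _ a b =>
    rw [symF_mk]
    match a, b with
    | none, none =>
        have : Efam none ⊗ₖ Efam none + Efam none ⊗ₖ Efam none = (2 : ℝ) • tsq E0 := by
          show E0 ⊗ₖ E0 + E0 ⊗ₖ E0 = (2 : ℝ) • tsq E0
          rw [tsq, two_smul]
        rw [this]
        exact Submodule.smul_mem T _ h0
    | none, some p => exact hS p
    | some p, none => 
        show Vm p ⊗ₖ E0 + E0 ⊗ₖ Vm p ∈ T
        rw [add_comm]
        exact hS p
    | some p, some q => exact hP p q

-- ### Choi members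
lemma isChoi_E0 : IsChoi E0 := by
  constructor
  · rw [E0_eq]
    exact psd_rsmul Matrix.PosSemidef.one (by norm_num)
  · exact ptraceO_E0

lemma isChoi_single (p : Fin 4 × Fin 3) : IsChoi (E0 + (1 / 4 : ℝ) • Vm p) := by
  constructor
  · have key : E0 + (1 / 4 : ℝ) • Vm p
        = (1 / 4 : ℝ) • (1 + Vm p) + (1 / 4 : ℝ) • (1 : M4') := by
      rw [E0_eq]; module
    rw [key]
    exact Matrix.PosSemidef.add (psd_rsmul (psd_one_add (Vm_herm p) (Vm_sq p)) (by norm_num))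
      (psd_rsmul Matrix.PosSemidef.one (by norm_num))
  · rw [ptraceO_add, ptraceO_rsmul, ptraceO_E0, ptraceO_Vm, smul_zero, add_zero]

lemma isChoi_double (p q : Fin 4 × Fin 3) :
    IsChoi (E0 + (1 / 4 : ℝ) • Vm p + (1 / 4 : ℝ) • Vm q) := by
  constructor
  · have key : E0 + (1 / 4 : ℝ) • Vm p + (1 / 4 : ℝ) • Vm q
        = (1 / 4 : ℝ) • (1 + Vm p) + (1 / 4 : ℝ) • (1 + Vm q) := by
      rw [E0_eq]; module
    rw [key]
    exact Matrix.PosSemidef.add (psd_rsmul (psd_one_add (Vm_herm p) (Vm_sq p)) (by norm_num))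
      (psd_rsmul (psd_one_add (Vm_herm q) (Vm_sq q)) (by norm_num))
  · rw [ptraceO_add, ptraceO_add, ptraceO_rsmul, ptraceO_rsmul, ptraceO_E0, ptraceO_Vm,
      ptraceO_Vm, smul_zero, add_zero, add_zero]

-- ### twoCopySpan = Wspan
lemma choi_mem_U {J : M4'} (hJ : IsChoi J) : J ∈ Uspan := by
  obtain ⟨r, hr⟩ := herm_ptrace_decomp hJ.1.1 hJ.2
  rw [hr]
  refine Submodule.add_mem _ (Submodule.subset_span ⟨none, rfl⟩) ?_
  exact Submodule.sum_mem _ fun a _ => Submodule.sum_mem _ fun o _ =>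
    Submodule.smul_mem _ _ (Submodule.subset_span ⟨some (a, o), rfl⟩)

lemma twoCopy_eq_W : twoCopySpan = Wspan := by
  apply le_antisymm
  · rw [twoCopySpan, Submodule.span_le]
    rintro M ⟨J, hJ, rfl⟩
    exact memW' (choi_mem_U hJ)
  · rw [Wspan, Submodule.span_le]
    rintro M ⟨q, rfl⟩
    refine gen_syms (1 / 4 : ℝ) (by norm_num) ?_ ?_ ?_ q
    · exact Submodule.subset_span ⟨E0, isChoi_E0, rfl⟩
    · intro p
      exact Submodule.subset_span ⟨_, isChoi_single p, rfl⟩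
    · intro p q'
      exact Submodule.subset_span ⟨_, isChoi_double p q', rfl⟩
-- ### Pfam decompositions
lemma sqrt2C : (Real.sqrt 2 : ℂ) * (Real.sqrt 2 : ℂ) = 2 := by
  rw [← Complex.ofReal_mul, Real.mul_self_sqrt (by norm_num)]
  norm_num

lemma sqrt2C_inv : ((Real.sqrt 2 : ℂ))⁻¹ * ((Real.sqrt 2 : ℂ))⁻¹ = 1 / 2 := by
  rw [← mul_inv, sqrt2C]
  norm_num

lemma Pfam_zero : Pfam 0 = E0 := rfl

lemma sqrt2_half : Real.sqrt 2 / 2 * (Real.sqrt 2 / 2) = 1 / 2 := by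
  rw [div_mul_div_comm, Real.mul_self_sqrt] <;> norm_num

lemma Pfam_one : Pfam 1 = E0 + (1 / 2 : ℝ) • Vm (1, 0) + (-(1 / 2) : ℝ) • Vm (2, 1)
    + (1 / 2 : ℝ) • Vm (3, 2) := by
  ext ⟨i, o⟩ ⟨i', o'⟩
  fin_cases i <;> fin_cases o <;> fin_cases i' <;> fin_cases o' <;>
  · simp only [Pfam, proj, ketPhiPlus, E0, Vm, sigmaI, sigmaO, pauliX, pauliY, pauliZ,
      Matrix.cons_val', Matrix.cons_val_zero, Matrix.cons_val_one, Matrix.head_cons,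
      Matrix.cons_val_fin_one, Matrix.empty_val', Matrix.head_fin_const,
      Matrix.kroneckerMap_apply, Matrix.one_apply, Matrix.add_apply, Matrix.smul_apply,
      Matrix.of_apply, smul_eq_mul, Complex.real_smul, star_mul', star_inv₀,
      Complex.star_def, Complex.conj_ofReal, Complex.conj_I, map_inv₀, Matrix.cons_val]
    norm_num [sqrt2C_inv, Complex.ext_iff, Matrix.one_apply, Prod.fst_zero, Prod.snd_zero,
      Prod.fst_one, Prod.snd_one, sqrt2_half]

lemma Pfam_two : Pfam 2 = E0 + (1 / 2 : ℝ) • Vm (0, 2) := by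
  ext ⟨i, o⟩ ⟨i', o'⟩
  fin_cases i <;> fin_cases o <;> fin_cases i' <;> fin_cases o' <;>
  · simp only [Pfam, proj, ket0, E0, Vm, sigmaI, sigmaO, pauliX, pauliY, pauliZ,
      Matrix.cons_val', Matrix.cons_val_zero, Matrix.cons_val_one, Matrix.head_cons,
      Matrix.cons_val_fin_one, Matrix.empty_val', Matrix.head_fin_const,
      Matrix.kroneckerMap_apply, Matrix.one_apply, Matrix.add_apply, Matrix.smul_apply,
      Matrix.of_apply, smul_eq_mul, Complex.real_smul, star_mul', star_inv₀,
      Complex.star_def, Complex.conj_ofReal, Complex.conj_I, map_inv₀, Matrix.cons_val]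
    norm_num [sqrt2C_inv, Complex.ext_iff, Matrix.one_apply, Prod.fst_zero, Prod.snd_zero,
      Prod.fst_one, Prod.snd_one, sqrt2_half]

lemma Pfam_three : Pfam 3 = E0 + (1 / 2 : ℝ) • Vm (0, 0) := by
  ext ⟨i, o⟩ ⟨i', o'⟩
  fin_cases i <;> fin_cases o <;> fin_cases i' <;> fin_cases o' <;>
  · simp only [Pfam, proj, ketPlus, E0, Vm, sigmaI, sigmaO, pauliX, pauliY, pauliZ,
      Matrix.cons_val', Matrix.cons_val_zero, Matrix.cons_val_one, Matrix.head_cons,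
      Matrix.cons_val_fin_one, Matrix.empty_val', Matrix.head_fin_const,
      Matrix.kroneckerMap_apply, Matrix.one_apply, Matrix.add_apply, Matrix.smul_apply,
      Matrix.of_apply, smul_eq_mul, Complex.real_smul, star_mul', star_inv₀,
      Complex.star_def, Complex.conj_ofReal, Complex.conj_I, map_inv₀, Matrix.cons_val]
    norm_num [sqrt2C_inv, Complex.ext_iff, Matrix.one_apply, Prod.fst_zero, Prod.snd_zero,
      Prod.fst_one, Prod.snd_one, sqrt2_half]

lemma Pfam_four : Pfam 4 = E0 + (1 / 2 : ℝ) • Vm (0, 1) := by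
  ext ⟨i, o⟩ ⟨i', o'⟩
  fin_cases i <;> fin_cases o <;> fin_cases i' <;> fin_cases o' <;>
  · simp only [Pfam, proj, ketPlusY, E0, Vm, sigmaI, sigmaO, pauliX, pauliY, pauliZ,
      Matrix.cons_val', Matrix.cons_val_zero, Matrix.cons_val_one, Matrix.head_cons,
      Matrix.cons_val_fin_one, Matrix.empty_val', Matrix.head_fin_const,
      Matrix.kroneckerMap_apply, Matrix.one_apply, Matrix.add_apply, Matrix.smul_apply,
      Matrix.of_apply, smul_eq_mul, Complex.real_smul, star_mul', star_inv₀,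
      Complex.star_def, Complex.conj_ofReal, Complex.conj_I, map_inv₀, Matrix.cons_val]
    norm_num [sqrt2C_inv, Complex.ext_iff, Matrix.one_apply, Prod.fst_zero, Prod.snd_zero,
      Prod.fst_one, Prod.snd_one, sqrt2_half]

lemma Pfam_mem (r : Fin 5) : Pfam r ∈ Uspan := by
  have hE : E0 ∈ Uspan := Submodule.subset_span ⟨none, rfl⟩
  have hV : ∀ p, Vm p ∈ Uspan := fun p => Submodule.subset_span ⟨some p, rfl⟩
  fin_cases r
  · exact hE
  · show Pfam 1 ∈ Uspan
    rw [show Pfam 1 = E0 + (1 / 2 : ℝ) • Vm (1, 0) + (-(1 / 2) : ℝ) • Vm (2, 1)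
      + (1 / 2 : ℝ) • Vm (3, 2) from Pfam_one]
    exact Submodule.add_mem _ (Submodule.add_mem _ (Submodule.add_mem _ hE
      (Submodule.smul_mem _ _ (hV _))) (Submodule.smul_mem _ _ (hV _)))
      (Submodule.smul_mem _ _ (hV _))
  · show Pfam 2 ∈ Uspan
    rw [show Pfam 2 = E0 + (1 / 2 : ℝ) • Vm (0, 2) from Pfam_two]
    exact Submodule.add_mem _ hE (Submodule.smul_mem _ _ (hV _))
  · show Pfam 3 ∈ Uspan
    rw [show Pfam 3 = E0 + (1 / 2 : ℝ) • Vm (0, 0) from Pfam_three]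
    exact Submodule.add_mem _ hE (Submodule.smul_mem _ _ (hV _))
  · show Pfam 4 ∈ Uspan
    rw [show Pfam 4 = E0 + (1 / 2 : ℝ) • Vm (0, 1) from Pfam_four]
    exact Submodule.add_mem _ hE (Submodule.smul_mem _ _ (hV _))

-- ### span of B2 equals Wspan
lemma spanB2_eq_W : Submodule.span ℝ (Set.range B2) = Wspan := by
  apply le_antisymm
  · rw [Submodule.span_le]
    rintro M ⟨idx, rfl⟩
    rcases idx with _ | ⟨⟨r, i, o, sgn⟩ | ⟨r, ⟨i, o⟩, ⟨i', o'⟩⟩⟩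
    · exact memW' (Submodule.subset_span ⟨none, rfl⟩)
    · have : (if sgn then (1 : ℂ) else -1) • (sigmaI i ⊗ₖ sigmaO o)
          = (if sgn then (1 : ℝ) else -1) • Vm (i, o) := by
        cases sgn <;> simp [Vm, ← rsmul]
      show tsq (Pfam r + (if sgn then (1 : ℂ) else -1) • (sigmaI i ⊗ₖ sigmaO o)) ∈ Wspan
      apply memW'
      rw [this]
      exact Submodule.add_mem _ (Pfam_mem r) (Submodule.smul_mem _ _
        (Submodule.subset_span ⟨some (i, o), rfl⟩))
    · show tsq (Pfam r + sigmaI i ⊗ₖ sigmaO o + sigmaI i' ⊗ₖ sigmaO o') ∈ Wspan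
      apply memW'
      show Pfam r + sigmaI i ⊗ₖ sigmaO o + sigmaI i' ⊗ₖ sigmaO o' ∈ Uspan
      exact Submodule.add_mem _ (Submodule.add_mem _ (Pfam_mem r)
        (Submodule.subset_span ⟨some (i, o), rfl⟩))
        (Submodule.subset_span ⟨some (i', o'), rfl⟩)
  · rw [Wspan, Submodule.span_le]
    rintro M ⟨q, rfl⟩
    refine gen_syms (1 : ℝ) one_ne_zero ?_ ?_ ?_ q
    · exact Submodule.subset_span ⟨Sum.inl (), rfl⟩
    · intro p
      have he : tsq (E0 + (1 : ℝ) • Vm p)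
          = B2 (Sum.inr (Sum.inl (0, p.1, p.2, true))) := by
        show _ = tsq (Pfam 0 + (if true then (1 : ℂ) else -1) • (sigmaI p.1 ⊗ₖ sigmaO p.2))
        rw [Pfam_zero, one_smul]
        norm_num
        rfl
      rw [he]
      exact Submodule.subset_span ⟨_, rfl⟩
    · intro p q'
      have he : tsq (E0 + (1 : ℝ) • Vm p + (1 : ℝ) • Vm q')
          = B2 (Sum.inr (Sum.inr (0, (p.1, p.2), (q'.1, q'.2)))) := by
        show _ = tsq (Pfam 0 + sigmaI p.1 ⊗ₖ sigmaO p.2 + sigmaI q'.1 ⊗ₖ sigmaO q'.2)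
        rw [Pfam_zero, one_smul, one_smul]
        rfl
      rw [he]
      exact Submodule.subset_span ⟨_, rfl⟩
-- ### trace table
def tval : Option (Fin 4 × Fin 3) → Option (Fin 4 × Fin 3) → ℝ := fun a b =>
  if a = b then (if a = none then 1 else 4) else 0

lemma trace_EE (a b : Option (Fin 4 × Fin 3)) :
    (Efam a * Efam b).trace = ((tval a b : ℝ) : ℂ) := by
  match a, b with
  | none, none =>
      show (E0 * E0).trace = _
      rw [E0_eq, ← rsmul, Matrix.smul_mul, Matrix.mul_smul, Matrix.one_mul,
        Matrix.trace_smul, Matrix.trace_smul, Matrix.trace_one, tval]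
      norm_num
  | none, some p =>
      show (E0 * Vm p).trace = _
      rw [E0_eq, ← rsmul, Matrix.smul_mul, Matrix.one_mul, Matrix.trace_smul, trace_Vm, tval]
      simp
  | some p, none =>
      show (Vm p * E0).trace = _
      rw [E0_eq, ← rsmul, Matrix.mul_smul, Matrix.mul_one, Matrix.trace_smul, trace_Vm, tval]
      simp
  | some p, some q =>
      show (Vm p * Vm q).trace = _
      rw [trace_Vm_mul, tval]
      rcases eq_or_ne p q with h | h
      · simp [h]
      · simp [h]

-- ### dual functionals
def phi (a b : Option (Fin 4 × Fin 3)) : M16' →ₗ[ℝ] ℝ where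
  toFun M := (((Efam a ⊗ₖ Efam b) * M).trace).re
  map_add' M N := by
    rw [Matrix.mul_add, Matrix.trace_add, Complex.add_re]
  map_smul' r M := by
    rw [Matrix.mul_smul, Matrix.trace_smul, Complex.smul_re]
    rfl

lemma phi_symF (a b c d : Option (Fin 4 × Fin 3)) :
    phi a b (symF (s(c, d))) = tval a c * tval b d + tval a d * tval b c := by
  show ((((Efam a ⊗ₖ Efam b) * (Efam c ⊗ₖ Efam d + Efam d ⊗ₖ Efam c))).trace).re = _
  rw [Matrix.mul_add, Matrix.trace_add, ← Matrix.mul_kronecker_mul,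
    ← Matrix.mul_kronecker_mul, Matrix.trace_kronecker, Matrix.trace_kronecker,
    trace_EE, trace_EE, trace_EE, trace_EE, ← Complex.ofReal_mul, ← Complex.ofReal_mul,
    ← Complex.ofReal_add, Complex.ofReal_re]

lemma symF_li : LinearIndependent ℝ symF := by
  rw [Fintype.linearIndependent_iff]
  intro g hg q
  induction q using Sym2.ind with
  | _ a b =>
  have happ := congrArg (phi a b) hg
  rw [map_sum, map_zero] at happ
  simp only [_root_.map_smul] at happ
  rw [Finset.sum_eq_single (s(a, b))] at happ
  · have hpos : 0 < tval a a * tval b b + tval a b * tval b a := by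
      simp only [tval]
      split_ifs <;> norm_num
    rw [phi_symF, smul_eq_mul] at happ
    rcases mul_eq_zero.mp happ with h | h
    · exact h
    · exact absurd h (ne_of_gt hpos)
  · intro q' _ hne
    induction q' using Sym2.ind with
    | _ c d =>
    have hz : ∀ x y : Option (Fin 4 × Fin 3), x ≠ y → tval x y = 0 := fun x y h => if_neg h
    have hval : tval a c * tval b d + tval a d * tval b c = 0 := by
      rcases eq_or_ne a c with h1 | h1
      · rcases eq_or_ne b d with h2 | h2
        · exact absurd (Sym2.eq_iff.mpr (Or.inl ⟨h1.symm, h2.symm⟩)) hne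
        · rcases eq_or_ne a d with h3 | h3
          · rcases eq_or_ne b c with h4 | h4
            · exact absurd (Sym2.eq_iff.mpr (Or.inr ⟨h4.symm, h3.symm⟩)) hne
            · rw [hz b d h2, hz b c h4]; ring
          · rw [hz b d h2, hz a d h3]; ring
      · rcases eq_or_ne a d with h3 | h3
        · rcases eq_or_ne b c with h4 | h4
          · exact absurd (Sym2.eq_iff.mpr (Or.inr ⟨h4.symm, h3.symm⟩)) hne
          · rw [hz a c h1, hz b c h4]; ring
        · rw [hz a c h1, hz a d h3]; ring
    rw [phi_symF, hval, smul_zero]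
  · intro h
    exact absurd (Finset.mem_univ _) h

lemma card_sym2 : Fintype.card (Sym2 (Option (Fin 4 × Fin 3))) = 91 := by
  rw [Sym2.card]
  simp
  rfl

lemma finrank_W : Module.finrank ℝ Wspan = 91 := by
  rw [Wspan, finrank_span_eq_card symF_li, card_sym2]
-- ### the distinguished 91-element subfamily of B2
def gfun : Option (Fin 4 × Fin 3) → Option (Fin 4 × Fin 3) → M16' := fun a b =>
  match a, b with
  | none, none => tsq E0
  | none, some p => tsq (E0 + Vm p)
  | some p, none => tsq (E0 + Vm p)
  | some p, some q => tsq (E0 + Vm p + Vm q)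

def Gfam : Sym2 (Option (Fin 4 × Fin 3)) → M16' :=
  Sym2.lift ⟨gfun, by
    rintro (_ | p) (_ | q) <;> simp only [gfun] <;> rw [add_right_comm]⟩

lemma Gfam_mk (a b : Option (Fin 4 × Fin 3)) : Gfam (s(a, b)) = gfun a b := by
  simp [Gfam]

lemma Gfam_range_sub : Set.range Gfam ⊆ Set.range B2 := by
  rintro M ⟨q, rfl⟩
  induction q using Sym2.ind with
  | _ a b =>
  rw [Gfam_mk]
  match a, b with
  | none, none => exact ⟨Sum.inl (), rfl⟩
  | none, some p =>
      refine ⟨Sum.inr (Sum.inl (0, p.1, p.2, true)), ?_⟩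
      show tsq (Pfam 0 + (if true then (1 : ℂ) else -1) • (sigmaI p.1 ⊗ₖ sigmaO p.2)) = _
      rw [Pfam_zero]
      norm_num
      rfl
  | some p, none =>
      refine ⟨Sum.inr (Sum.inl (0, p.1, p.2, true)), ?_⟩
      show tsq (Pfam 0 + (if true then (1 : ℂ) else -1) • (sigmaI p.1 ⊗ₖ sigmaO p.2)) = _
      rw [Pfam_zero]
      norm_num
      rfl
  | some p, some q =>
      refine ⟨Sum.inr (Sum.inr (0, (p.1, p.2), (q.1, q.2))), ?_⟩
      show tsq (Pfam 0 + sigmaI p.1 ⊗ₖ sigmaO p.2 + sigmaI q.1 ⊗ₖ sigmaO q.2) = _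
      rw [Pfam_zero]
      rfl

lemma spanG_eq_W : Submodule.span ℝ (Set.range Gfam) = Wspan := by
  apply le_antisymm
  · rw [Submodule.span_le]
    have hsub : Set.range Gfam ⊆ ↑(Submodule.span ℝ (Set.range B2)) :=
      fun x hx => Submodule.subset_span (Gfam_range_sub hx)
    rw [← spanB2_eq_W] at *
    exact hsub
  · rw [Wspan, Submodule.span_le]
    rintro M ⟨q, rfl⟩
    refine gen_syms (1 : ℝ) one_ne_zero ?_ ?_ ?_ q
    · exact Submodule.subset_span ⟨s(none, none), by rw [Gfam_mk]; rfl⟩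
    · intro p
      refine Submodule.subset_span ⟨s(none, some p), ?_⟩
      rw [Gfam_mk]
      show tsq (E0 + Vm p) = _
      rw [one_smul]
    · intro p q'
      refine Submodule.subset_span ⟨s(some p, some q'), ?_⟩
      rw [Gfam_mk]
      show tsq (E0 + Vm p + Vm q') = _
      rw [one_smul, one_smul]

lemma Gfam_li : LinearIndependent ℝ Gfam := by
  rw [linearIndependent_iff_card_eq_finrank_span, card_sym2, Set.finrank, spanG_eq_W,
    finrank_W]
/-- Eq. (26): the ℝ-span of {J ⊗ J : J a qubit-channel Choi operator} has dimension
91 = C(14,2), equals the ℝ-span of B₂, and B₂ contains a 91-element ℝ-linearly independent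
subset spanning it. -/
theorem basis_B2 :
    Module.finrank ℝ twoCopySpan = 91 ∧
    91 = Nat.choose 14 2 ∧
    Submodule.span ℝ (Set.range B2) = twoCopySpan ∧
    ∃ s : Finset (Matrix ((Fin 2 × Fin 2) × (Fin 2 × Fin 2))
        ((Fin 2 × Fin 2) × (Fin 2 × Fin 2)) ℂ),
      ↑s ⊆ Set.range B2 ∧ s.card = 91 ∧
      LinearIndependent ℝ (fun x : s => (x : Matrix ((Fin 2 × Fin 2) × (Fin 2 × Fin 2))
        ((Fin 2 × Fin 2) × (Fin 2 × Fin 2)) ℂ)) ∧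
      Submodule.span ℝ (s : Set _) = twoCopySpan := by
  classical
  have hTW : twoCopySpan = Wspan := twoCopy_eq_W
  have hcoe : ↑(Finset.image Gfam Finset.univ) = Set.range Gfam := by
    rw [Finset.coe_image, Finset.coe_univ, Set.image_univ]
  refine ⟨by rw [hTW]; exact finrank_W, by rfl, by rw [spanB2_eq_W, hTW],
    Finset.image Gfam Finset.univ, ?_, ?_, ?_, ?_⟩
  · rw [hcoe]
    exact Gfam_range_sub
  · rw [Finset.card_image_of_injective _ Gfam_li.injective, Finset.card_univ, card_sym2]
  · have h1 : LinearIndependent ℝ (fun x : Set.range Gfam => (x : M16')) :=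
      (linearIndepOn_id_range_iff Gfam_li.injective).mpr Gfam_li
    exact LinearIndepOn.mono (R := ℝ) (v := id) h1 (le_of_eq hcoe)
  · rw [hcoe, spanG_eq_W, hTW]
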